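/- arXiv:1501.01506 — 4 statements merged into one kernel-verified Lean document; each statement's English description precedes it below -/
import Mathlib

section
/- Let T ≥ 2, α ∈ ℝ, β := α - 1, and θ_j^T := (T+1-j) - (T-j)α. Define the symmetric T×T matrix A_T by: a_{ii} = 1/2 + β² ∑_{j=i}^{T-1} θ_{j+1}^T α^{2j-2i} for 1 ≤ i ≤ T-1; a_{TT} = 1/2; a_{ik} = (β θ_i^T α^{i-k-1})/2 + β² ∑_{j=i}^{T-1} θ_{j+1}^T α^{2j-i-k} for 1 ≤ k < i ≤ T-1; a_{Tk} = (β α^{T-k-1})/2 for 1 ≤ k ≤ T-1. Then for every n with 2 ≤ n ≤ T, a_{1,n} - β ∑_{i=2}^{T} a_{i,n} = 0. -/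
open Finset

/-- θ_j^T = (T+1-j) - (T-j)α. -/
noncomputable def theta (α : ℝ) (T j : ℕ) : ℝ := ((T : ℝ) + 1 - j) - ((T : ℝ) - j) * α

/-- Entry a_{ik} of the matrix A_T, for 1-based indices with k ≤ i. -/
noncomputable def entryLow (α : ℝ) (T i k : ℕ) : ℝ :=
  if i = k then
    (if i = T then (1 : ℝ) / 2
     else 1 / 2 + (α - 1) ^ 2 * ∑ j ∈ Finset.Icc i (T - 1), theta α T (j + 1) * α ^ (2 * j - 2 * i))
  else if i = T then (α - 1) * α ^ (T - k - 1) / 2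
  else (α - 1) * theta α T i * α ^ (i - k - 1) / 2
        + (α - 1) ^ 2 * ∑ j ∈ Finset.Icc i (T - 1), theta α T (j + 1) * α ^ (2 * j - i - k)

/-- Entry a_{ik} of A_T (extended symmetrically), 1-based indices. -/
noncomputable def entryA (α : ℝ) (T i k : ℕ) : ℝ :=
  if k ≤ i then entryLow α T i k else entryLow α T k i

/-- The symmetric T×T matrix A_T. -/
noncomputable def Amat (α : ℝ) (T : ℕ) : Matrix (Fin T) (Fin T) ℝ :=
  fun i k => entryA α T (i.1 + 1) (k.1 + 1)

/- ---------- auxiliary lemmas ---------- -/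

lemma revP (α : ℝ) (ν : ℕ) :
    ∑ i ∈ Finset.Icc 2 (ν+1), α^(ν+1-i) = ∑ s ∈ Finset.range ν, α^s := by
  rw [← Finset.Ico_add_one_right_eq_Icc, Finset.sum_Ico_eq_sum_range]
  rw [show ν+1+1-2 = ν from by omega]
  rw [← Finset.sum_range_reflect (fun s => α^s) ν]
  apply Finset.sum_congr rfl
  intro s hs; simp only [Finset.mem_range] at hs
  congr 1; omega

lemma revQ (α : ℝ) (ν : ℕ) :
    ∑ i ∈ Finset.Icc 2 (ν+1), α^(ν+2-i) = ∑ s ∈ Finset.range ν, α^(s+1) := by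
  rw [← Finset.Ico_add_one_right_eq_Icc, Finset.sum_Ico_eq_sum_range]
  rw [show ν+1+1-2 = ν from by omega]
  rw [← Finset.sum_range_reflect (fun s => α^(s+1)) ν]
  apply Finset.sum_congr rfl
  intro s hs; simp only [Finset.mem_range] at hs
  congr 1; omega

lemma key_sum (α : ℝ) (M : ℕ) :
    ∑ s ∈ Finset.range (M+1), (((M:ℝ)+1-s) - ((M:ℝ)-s)*α) * α^s = (M:ℝ)+1 := by
  induction M with
  | zero => simp
  | succ M ih =>
    rw [Finset.sum_range_succ]
    have h1 : ∑ s ∈ Finset.range (M+1), (((M:ℝ)+1+1-s) - ((M:ℝ)+1-s)*α) * α^s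
        = ∑ s ∈ Finset.range (M+1), ((((M:ℝ)+1-s) - ((M:ℝ)-s)*α) * α^s + (1-α)*α^s) := by
      apply Finset.sum_congr rfl; intro s _; push_cast; ring
    have h2 : (α - 1) * ∑ s ∈ Finset.range (M+1), α^s = α^(M+1) - 1 := by
      rw [mul_comm]; exact geom_sum_mul α (M+1)
    push_cast [h1, Finset.sum_add_distrib, ih, ← Finset.mul_sum]
    push_cast at h2 ⊢
    nlinarith [h2]

lemma tri_swap (M : ℕ) (g : ℕ → ℕ → ℝ) :
    ∑ s ∈ Finset.range M, ∑ t ∈ Finset.range (M-s), g s t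
      = ∑ u ∈ Finset.range M, ∑ s ∈ Finset.range (u+1), g s (u-s) := by
  rw [Finset.sum_sigma', Finset.sum_sigma']
  apply Finset.sum_nbij' (fun p => (⟨p.1 + p.2, p.1⟩ : Σ _ : ℕ, ℕ))
    (fun p => (⟨p.2, p.1 - p.2⟩ : Σ _ : ℕ, ℕ))
  · intro a ha; simp only [Finset.mem_sigma, Finset.mem_range] at *; omega
  · intro a ha; simp only [Finset.mem_sigma, Finset.mem_range] at *; omega
  · intro a ha; simp only [Finset.mem_sigma, Finset.mem_range] at ha
    ext <;> simp <;> omega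
  · intro a ha; simp only [Finset.mem_sigma, Finset.mem_range] at ha
    ext <;> simp <;> omega
  · intro a ha; simp only [Finset.mem_sigma, Finset.mem_range] at ha
    dsimp only; congr 1; omega

lemma swap_geom (α : ℝ) (f : ℕ → ℝ) (M : ℕ) :
    (α-1) * ∑ s ∈ Finset.range M, ∑ t ∈ Finset.range (M-s), f (s+t) * α^(s+2*t+1)
      = ∑ u ∈ Finset.range M, f u * (α^(2*u+2) - α^(u+1)) := by
  rw [tri_swap M (fun s t => f (s+t) * α^(s+2*t+1))]
  rw [Finset.mul_sum]
  apply Finset.sum_congr rfl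
  intro u _
  have h1 : ∑ s ∈ Finset.range (u+1), f (s+(u-s)) * α^(s+2*(u-s)+1)
      = f u * (α^(u+1) * ∑ s ∈ Finset.range (u+1), α^s) := by
    rw [Finset.mul_sum, Finset.mul_sum]
    rw [← Finset.sum_range_reflect (fun s => f u * (α^(u+1) * α^s)) (u+1)]
    apply Finset.sum_congr rfl
    intro s hs; simp only [Finset.mem_range] at hs
    rw [show s+(u-s) = u from by omega, ← pow_add,
        show u+1+(u+1-1-s) = s+2*(u-s)+1 from by omega]
  rw [h1]
  have h2 : (∑ s ∈ Finset.range (u+1), α^s) * (α-1) = α^(u+1) - 1 := geom_sum_mul α (u+1)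
  have h3 : α^(2*u+2) = α^(u+1) * α^(u+1) := by rw [← pow_add]; congr 1; omega
  linear_combination f u * α^(u+1) * h2 + f u * h3

lemma innerD (α : ℝ) (ν M k : ℕ) (hk1 : 1 ≤ k) (hk : k ≤ ν+2) :
    ∑ j ∈ Finset.Icc (ν+2) (ν+M+2), theta α (ν+M+3) (j+1) * α^(2*j-(ν+2)-k)
      = α^(ν+2-k) * ∑ t ∈ Finset.range (M+1), theta α (ν+M+3) (ν+3+t) * α^(2*t) := by
  rw [Finset.mul_sum, ← Finset.Ico_add_one_right_eq_Icc, Finset.sum_Ico_eq_sum_range,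
      show ν+M+2+1-(ν+2) = M+1 from by omega]
  apply Finset.sum_congr rfl
  intro t ht; simp only [Finset.mem_range] at ht
  rw [show ν+2+t+1 = ν+3+t from by omega,
      show 2*(ν+2+t)-(ν+2)-k = (ν+2-k)+2*t from by omega, pow_add]
  ring

/-- Row-sum lemma: a_{1,n} - β ∑_{i=2}^{T} a_{i,n} = 0 for 2 ≤ n ≤ T. -/
theorem row_sum_zero (α : ℝ) (T n : ℕ) (hT : 2 ≤ T) (hn2 : 2 ≤ n) (hnT : n ≤ T) :
    entryA α T 1 n - (α - 1) * ∑ i ∈ Finset.Icc 2 T, entryA α T i n = 0 := by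
  rcases eq_or_lt_of_le hnT with hcase | hcase
  · -- case n = T
    subst hcase
    obtain ⟨m, rfl⟩ : ∃ m, n = m + 2 := ⟨n - 2, by omega⟩
    have e1 : entryA α (m+2) 1 (m+2) = (α-1) * α^m / 2 := by
      unfold entryA entryLow
      rw [if_neg (by omega), if_neg (by omega), if_pos rfl]; norm_num
    have e2 : ∀ i ∈ Finset.Icc 2 (m+1), entryA α (m+2) i (m+2) = (α-1)*α^(m+1-i)/2 := by
      intro i hi; simp only [Finset.mem_Icc] at hi
      unfold entryA entryLow
      rw [if_neg (by omega), if_neg (by omega), if_pos rfl, show m+2-i-1 = m+1-i from by omega]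
    have e3 : entryA α (m+2) (m+2) (m+2) = 1/2 := by
      unfold entryA entryLow
      rw [if_pos le_rfl, if_pos rfl, if_pos rfl]
    have hsplit : ∑ i ∈ Finset.Icc 2 (m+2), entryA α (m+2) i (m+2)
        = (∑ i ∈ Finset.Icc 2 (m+1), entryA α (m+2) i (m+2)) + entryA α (m+2) (m+2) (m+2) := by
      rw [← Finset.sum_Icc_succ_top (by omega)]
    rw [e1, hsplit, e3, Finset.sum_congr rfl e2]
    have e4 : ∑ i ∈ Finset.Icc 2 (m+1), (α-1)*α^(m+1-i)/2
        = (α-1)/2 * ∑ i ∈ Finset.Icc 2 (m+1), α^(m+1-i) := by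
      rw [Finset.mul_sum]; apply Finset.sum_congr rfl; intros; ring
    rw [e4, revP]
    have e5 : (α-1) * ∑ s ∈ Finset.range m, α^s = α^m - 1 := by
      rw [mul_comm]; exact geom_sum_mul α m
    linear_combination (-(α-1)/2) * e5
  · -- case n < T
    obtain ⟨ν, rfl⟩ : ∃ ν, n = ν + 2 := ⟨n - 2, by omega⟩
    obtain ⟨M, rfl⟩ : ∃ M, T = ν + M + 3 := ⟨T - ν - 3, by omega⟩
    have hT1 : ν+M+3-1 = ν+M+2 := by omega
    -- first entry
    have e1 : entryA α (ν+M+3) 1 (ν+2)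
        = (α-1) * theta α (ν+M+3) (ν+2) * α^ν / 2
          + (α-1)^2 * (α^(ν+1) * ∑ t ∈ Finset.range (M+1), theta α (ν+M+3) (ν+3+t) * α^(2*t)) := by
      unfold entryA entryLow
      rw [if_neg (by omega), if_neg (by omega), if_neg (by omega), hT1,
          show ν+2-1-1 = ν from by omega,
          innerD α ν M 1 le_rfl (by omega), show ν+2-1 = ν+1 from by omega]
    -- columns 2..ν+1
    have e2 : ∀ i ∈ Finset.Icc 2 (ν+1), entryA α (ν+M+3) i (ν+2)
        = (α-1) * theta α (ν+M+3) (ν+2) * α^(ν+1-i) / 2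
          + (α-1)^2 * (α^(ν+2-i) * ∑ t ∈ Finset.range (M+1), theta α (ν+M+3) (ν+3+t) * α^(2*t)) := by
      intro i hi; simp only [Finset.mem_Icc] at hi
      unfold entryA entryLow
      rw [if_neg (by omega), if_neg (by omega), if_neg (by omega), hT1,
          show ν+2-i-1 = ν+1-i from by omega,
          innerD α ν M i (by omega) (by omega)]
    -- diagonal
    have e3sum : ∑ j ∈ Finset.Icc (ν+2) (ν+M+2), theta α (ν+M+3) (j+1) * α^(2*j-2*(ν+2))
        = ∑ t ∈ Finset.range (M+1), theta α (ν+M+3) (ν+3+t) * α^(2*t) := by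
      rw [← Finset.Ico_add_one_right_eq_Icc, Finset.sum_Ico_eq_sum_range,
          show ν+M+2+1-(ν+2) = M+1 from by omega]
      apply Finset.sum_congr rfl
      intro t ht; simp only [Finset.mem_range] at ht
      rw [show ν+2+t+1 = ν+3+t from by omega,
          show 2*(ν+2+t)-2*(ν+2) = 2*t from by omega]
    have e3 : entryA α (ν+M+3) (ν+2) (ν+2)
        = 1/2 + (α-1)^2 * ∑ t ∈ Finset.range (M+1), theta α (ν+M+3) (ν+3+t) * α^(2*t) := by
      unfold entryA entryLow
      rw [if_pos le_rfl, if_pos rfl, if_neg (by omega), hT1, e3sum]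
    -- rows ν+3 .. ν+M+2
    have e4 : ∑ i ∈ Finset.Icc (ν+3) (ν+M+2), entryA α (ν+M+3) i (ν+2)
        = ∑ s ∈ Finset.range M, ((α-1) * theta α (ν+M+3) (ν+3+s) * α^s / 2
            + (α-1)^2 * ∑ t ∈ Finset.range (M-s),
                (fun u => theta α (ν+M+3) (ν+4+u)) (s+t) * α^(s+2*t+1)) := by
      rw [← Finset.Ico_add_one_right_eq_Icc, Finset.sum_Ico_eq_sum_range,
          show ν+M+2+1-(ν+3) = M from by omega]
      apply Finset.sum_congr rfl
      intro s hs; simp only [Finset.mem_range] at hs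
      have hin : ∑ j ∈ Finset.Icc (ν+3+s) (ν+M+2),
            theta α (ν+M+3) (j+1) * α^(2*j-(ν+3+s)-(ν+2))
          = ∑ t ∈ Finset.range (M-s), (fun u => theta α (ν+M+3) (ν+4+u)) (s+t) * α^(s+2*t+1) := by
        rw [← Finset.Ico_add_one_right_eq_Icc, Finset.sum_Ico_eq_sum_range,
            show ν+M+2+1-(ν+3+s) = M-s from by omega]
        apply Finset.sum_congr rfl
        intro t ht; simp only [Finset.mem_range] at ht
        dsimp only
        rw [show ν+3+s+t+1 = ν+4+(s+t) from by omega,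
            show 2*(ν+3+s+t)-(ν+3+s)-(ν+2) = s+2*t+1 from by omega]
      unfold entryA entryLow
      rw [if_pos (by omega), if_neg (by omega), if_neg (by omega), hT1,
          show ν+3+s-(ν+2)-1 = s from by omega, hin]
    -- last row
    have e5 : entryA α (ν+M+3) (ν+M+3) (ν+2) = (α-1) * α^M / 2 := by
      unfold entryA entryLow
      rw [if_pos (by omega), if_neg (by omega), if_pos rfl,
          show ν+M+3-(ν+2)-1 = M from by omega]
    -- splitting the sum
    have hsplit : ∑ i ∈ Finset.Icc 2 (ν+M+3), entryA α (ν+M+3) i (ν+2)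
        = (∑ i ∈ Finset.Icc 2 (ν+1), entryA α (ν+M+3) i (ν+2))
          + entryA α (ν+M+3) (ν+2) (ν+2)
          + (∑ i ∈ Finset.Icc (ν+3) (ν+M+2), entryA α (ν+M+3) i (ν+2))
          + entryA α (ν+M+3) (ν+M+3) (ν+2) := by
      have h1 := Finset.sum_Ico_consecutive (fun i => entryA α (ν+M+3) i (ν+2))
        (show 2 ≤ ν+2 by omega) (show ν+2 ≤ ν+M+4 by omega)
      have h2 := Finset.sum_Ico_consecutive (fun i => entryA α (ν+M+3) i (ν+2))
        (show ν+2 ≤ ν+3 by omega) (show ν+3 ≤ ν+M+4 by omega)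
      have h3 := Finset.sum_Ico_consecutive (fun i => entryA α (ν+M+3) i (ν+2))
        (show ν+3 ≤ ν+M+3 by omega) (show ν+M+3 ≤ ν+M+4 by omega)
      have s1 : Finset.Ico (ν+2) (ν+3) = {ν+2} := by
        ext x; simp only [Finset.mem_Ico, Finset.mem_singleton]; omega
      have s2 : Finset.Ico (ν+M+3) (ν+M+4) = {ν+M+3} := by
        ext x; simp only [Finset.mem_Ico, Finset.mem_singleton]; omega
      have c1 : Finset.Icc 2 (ν+M+3) = Finset.Ico 2 (ν+M+4) := by
        ext x; simp only [Finset.mem_Icc, Finset.mem_Ico]; omega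
      have c2 : Finset.Icc 2 (ν+1) = Finset.Ico 2 (ν+2) := by
        ext x; simp only [Finset.mem_Icc, Finset.mem_Ico]; omega
      have c3 : Finset.Icc (ν+3) (ν+M+2) = Finset.Ico (ν+3) (ν+M+3) := by
        ext x; simp only [Finset.mem_Icc, Finset.mem_Ico]; omega
      rw [c1, c2, c3, ← h1, ← h2, ← h3, s1, s2, Finset.sum_singleton, Finset.sum_singleton]
      ring
    rw [e1, hsplit, e3, e5, Finset.sum_congr rfl e2, e4]
    -- split the i-sum
    have eX1 : ∑ i ∈ Finset.Icc 2 (ν+1),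
          ((α-1) * theta α (ν+M+3) (ν+2) * α^(ν+1-i) / 2
            + (α-1)^2 * (α^(ν+2-i) * ∑ t ∈ Finset.range (M+1), theta α (ν+M+3) (ν+3+t) * α^(2*t)))
        = (α-1) * theta α (ν+M+3) (ν+2) / 2 * (∑ i ∈ Finset.Icc 2 (ν+1), α^(ν+1-i))
          + (α-1)^2 * (∑ t ∈ Finset.range (M+1), theta α (ν+M+3) (ν+3+t) * α^(2*t))
              * (∑ i ∈ Finset.Icc 2 (ν+1), α^(ν+2-i)) := by
      rw [Finset.sum_add_distrib, Finset.mul_sum, Finset.mul_sum]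
      congr 1 <;> (apply Finset.sum_congr rfl; intros; ring)
    have eS3 : ∑ s ∈ Finset.range M, ((α-1) * theta α (ν+M+3) (ν+3+s) * α^s / 2
            + (α-1)^2 * ∑ t ∈ Finset.range (M-s),
                (fun u => theta α (ν+M+3) (ν+4+u)) (s+t) * α^(s+2*t+1))
        = (α-1)/2 * (∑ s ∈ Finset.range M, theta α (ν+M+3) (ν+3+s) * α^s)
          + (α-1)^2 * (∑ s ∈ Finset.range M, ∑ t ∈ Finset.range (M-s),
              (fun u => theta α (ν+M+3) (ν+4+u)) (s+t) * α^(s+2*t+1)) := by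
      rw [Finset.sum_add_distrib, Finset.mul_sum, Finset.mul_sum]
      congr 1 <;> (apply Finset.sum_congr rfl; intros; ring)
    rw [eX1, eS3, revP, revQ]
    -- geometric facts
    have hP : (α-1) * ∑ s ∈ Finset.range ν, α^s = α^ν - 1 := by
      rw [mul_comm]; exact geom_sum_mul α ν
    have hQ : (α-1) * ∑ s ∈ Finset.range ν, α^(s+1) = α^(ν+1) - α := by
      have h : ∑ s ∈ Finset.range ν, α^(s+1) = α * ∑ s ∈ Finset.range ν, α^s := by
        rw [Finset.mul_sum]; apply Finset.sum_congr rfl; intros; ring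
      have hpow : α^(ν+1) = α * α^ν := by rw [pow_succ]; ring
      rw [h]; linear_combination α * hP - hpow
    have hW := swap_geom α (fun u => theta α (ν+M+3) (ν+4+u)) M
    have hWsplit : ∑ u ∈ Finset.range M, theta α (ν+M+3) (ν+4+u) * (α^(2*u+2) - α^(u+1))
        = (∑ u ∈ Finset.range M, theta α (ν+M+3) (ν+4+u) * α^(2*u+2))
          - ∑ u ∈ Finset.range M, theta α (ν+M+3) (ν+4+u) * α^(u+1) := by
      rw [← Finset.sum_sub_distrib]; apply Finset.sum_congr rfl; intros; ring
    -- G facts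
    have hGval : ∑ s ∈ Finset.range (M+1), theta α (ν+M+3) (ν+3+s) * α^s = (M:ℝ) + 1 := by
      rw [show ∑ s ∈ Finset.range (M+1), theta α (ν+M+3) (ν+3+s) * α^s
          = ∑ s ∈ Finset.range (M+1), (((M:ℝ)+1-s) - ((M:ℝ)-s)*α) * α^s from ?_]
      · exact key_sum α M
      apply Finset.sum_congr rfl
      intro s hs; simp only [Finset.mem_range] at hs
      unfold theta; push_cast; ring
    have hGtop : ∑ s ∈ Finset.range (M+1), theta α (ν+M+3) (ν+3+s) * α^s
        = (∑ s ∈ Finset.range M, theta α (ν+M+3) (ν+3+s) * α^s)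
          + theta α (ν+M+3) (ν+3+M) * α^M := by
      rw [Finset.sum_range_succ]
    have hGbot : ∑ s ∈ Finset.range (M+1), theta α (ν+M+3) (ν+3+s) * α^s
        = theta α (ν+M+3) (ν+3)
          + ∑ u ∈ Finset.range M, theta α (ν+M+3) (ν+4+u) * α^(u+1) := by
      rw [Finset.sum_range_succ']
      have h : ∑ u ∈ Finset.range M, theta α (ν+M+3) (ν+3+(u+1)) * α^(u+1)
          = ∑ u ∈ Finset.range M, theta α (ν+M+3) (ν+4+u) * α^(u+1) := by
        apply Finset.sum_congr rfl; intro u _; rw [show ν+3+(u+1) = ν+4+u from by omega]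
      rw [h]; simp; ring
    have hDbot : ∑ t ∈ Finset.range (M+1), theta α (ν+M+3) (ν+3+t) * α^(2*t)
        = theta α (ν+M+3) (ν+3)
          + ∑ u ∈ Finset.range M, theta α (ν+M+3) (ν+4+u) * α^(2*u+2) := by
      rw [Finset.sum_range_succ']
      have h : ∑ u ∈ Finset.range M, theta α (ν+M+3) (ν+3+(u+1)) * α^(2*(u+1))
          = ∑ u ∈ Finset.range M, theta α (ν+M+3) (ν+4+u) * α^(2*u+2) := by
        apply Finset.sum_congr rfl; intro u _
        rw [show ν+3+(u+1) = ν+4+u from by omega, show 2*(u+1) = 2*u+2 from by omega]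
      rw [h]; simp; ring
    have htop : theta α (ν+M+3) (ν+3+M) = 1 := by unfold theta; push_cast; ring
    have hthn : theta α (ν+M+3) (ν+2) = ((M:ℝ)+2) - ((M:ℝ)+1)*α := by
      unfold theta; push_cast; ring
    beta_reduce at hW ⊢
    linear_combination
      (-(α-1)*theta α (ν+M+3) (ν+2)/2) * hP
      + (-(α-1)^2*(∑ t ∈ Finset.range (M+1), theta α (ν+M+3) (ν+3+t) * α^(2*t))) * hQ
      + (-(α-1)^2) * hW
      + (-(α-1)^2) * hWsplit
      + ((α-1)^2) * hDbot
      + (-(α-1)^2) * hGbot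
      + ((α-1)^2/2) * hGtop
      + ((α-1)^2*α^M/2) * htop
      + ((α-1)^2/2) * hGval
      + ((α-1)/2) * hthn
end

section
/- With A_T as defined, a_{1,1} - β ∑_{i=2}^{T} a_{i,1} = (1 + β²(T-1))/2. -/
open Finset

/- ### Auxiliary lemmas -/

lemma sum_Icc_range (f : ℕ → ℝ) (a n : ℕ) :
    ∑ i ∈ Finset.Icc a (a + n), f i = ∑ k ∈ Finset.range (n + 1), f (a + k) := by
  rw [← Finset.Ico_add_one_right_eq_Icc, Finset.sum_Ico_eq_sum_range]
  have : a + n + 1 - a = n + 1 := by omega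
  rw [this]

lemma theta_succT (α : ℝ) (T j : ℕ) : theta α (T + 1) j = theta α T j + (1 - α) := by
  unfold theta; push_cast; ring

lemma theta_diag (α : ℝ) (T : ℕ) : theta α T T = 1 := by
  unfold theta; ring

lemma sumTheta (α : ℝ) : ∀ n : ℕ, ∑ k ∈ range n, theta α (n + 1) (k + 2) * α ^ k = n := by
  intro n
  induction n with
  | zero => simp
  | succ n ih =>
    rw [Finset.sum_range_succ]
    have h1 : ∀ k, theta α (n + 1 + 1) (k + 2) = theta α (n + 1) (k + 2) + (1 - α) :=
      fun k => theta_succT α (n + 1) (k + 2)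
    have h2 : ∑ k ∈ range n, theta α (n + 1 + 1) (k + 2) * α ^ k
        = (∑ k ∈ range n, theta α (n + 1) (k + 2) * α ^ k)
          + (1 - α) * ∑ k ∈ range n, α ^ k := by
      rw [Finset.mul_sum, ← Finset.sum_add_distrib]
      exact Finset.sum_congr rfl fun k _ => by rw [h1]; ring
    have h3 : theta α (n + 1 + 1) (n + 2) = 1 := by
      have := theta_diag α (n + 2); simpa using this
    have h4 : (1 - α) * ∑ k ∈ range n, α ^ k = 1 - α ^ n := by
      have := geom_sum_mul α n
      linarith [this]
    rw [h2, ih, h3, h4]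
    push_cast; ring

lemma tri_split (f : ℕ → ℕ → ℝ) (n : ℕ) :
    ∑ k ∈ range (n + 1), ∑ l ∈ range (n + 1 - k), f k l
      = (∑ k ∈ range n, ∑ l ∈ range (n - k), f k l)
        + ∑ k ∈ range (n + 1), f k (n - k) := by
  have h1 : ∑ k ∈ range (n + 1), ∑ l ∈ range (n + 1 - k), f k l
      = ∑ k ∈ range (n + 1), ((∑ l ∈ range (n - k), f k l) + f k (n - k)) := by
    refine Finset.sum_congr rfl fun k hk => ?_
    rw [Finset.mem_range] at hk
    have : n + 1 - k = (n - k) + 1 := by omega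
    rw [this, Finset.sum_range_succ]
  rw [h1, Finset.sum_add_distrib]
  congr 1
  rw [Finset.sum_range_succ]
  simp

lemma Dlem (α : ℝ) (T n : ℕ) :
    (α - 1) * ∑ k ∈ range n, ∑ l ∈ range (n - k), theta α T (k + l + 3) * α ^ (2 * l + k + 1)
      = ∑ k ∈ range n, theta α T (k + 3) * (α ^ (2 * k + 2) - α ^ (k + 1)) := by
  induction n with
  | zero => simp
  | succ n ih =>
    rw [tri_split, Finset.sum_range_succ (fun k => theta α T (k + 3) * (α ^ (2 * k + 2) - α ^ (k + 1)))]
    rw [mul_add, ih]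
    congr 1
    -- (α-1) * ∑ k in range (n+1), theta α T (k + (n-k) + 3) * α ^ (2*(n-k)+k+1)
    --   = theta α T (n+3) * (α^(2n+2) - α^(n+1))
    have h1 : ∑ k ∈ range (n + 1), theta α T (k + (n - k) + 3) * α ^ (2 * (n - k) + k + 1)
        = theta α T (n + 3) * ∑ k ∈ range (n + 1), α ^ (2 * n - k + 1) := by
      rw [Finset.mul_sum]
      refine Finset.sum_congr rfl fun k hk => ?_
      rw [Finset.mem_range] at hk
      have e1 : k + (n - k) + 3 = n + 3 := by omega
      have e2 : 2 * (n - k) + k + 1 = 2 * n - k + 1 := by omega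
      rw [e1, e2]
    have h2 : ∑ k ∈ range (n + 1), α ^ (2 * n - k + 1)
        = α ^ (n + 1) * ∑ k ∈ range (n + 1), α ^ k := by
      have hr : ∑ k ∈ range (n + 1), α ^ (2 * n - k + 1)
          = ∑ k ∈ range (n + 1), α ^ (n + 1 + k) := by
        rw [← Finset.sum_range_reflect (fun j => α ^ (n + 1 + j)) (n + 1)]
        refine Finset.sum_congr rfl fun k hk => ?_
        rw [Finset.mem_range] at hk
        congr 1
        omega
      rw [hr, Finset.mul_sum]
      exact Finset.sum_congr rfl fun k _ => by rw [← pow_add]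
    have h3 : (∑ k ∈ range (n + 1), α ^ k) * (α - 1) = α ^ (n + 1) - 1 := geom_sum_mul α (n + 1)
    rw [h1, h2]
    linear_combination (theta α T (n + 3) * α ^ (n + 1)) * h3

lemma theta_top (α : ℝ) (n : ℕ) : theta α (n + 2) (n + 2) = 1 := theta_diag α (n + 2)

/-- a_{1,1} - β ∑_{i=2}^{T} a_{i,1} = (1 + β²(T-1))/2. -/
theorem first_column_sum (α : ℝ) (T : ℕ) (hT : 2 ≤ T) :
    entryA α T 1 1 - (α - 1) * ∑ i ∈ Finset.Icc 2 T, entryA α T i 1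
      = (1 + (α - 1) ^ 2 * ((T : ℝ) - 1)) / 2 := by
  obtain ⟨n, rfl⟩ : ∃ n, T = n + 2 := ⟨T - 2, by omega⟩
  -- entry (1,1)
  have h11 : entryA α (n + 2) 1 1
      = 1 / 2 + (α - 1) ^ 2 * ∑ k ∈ range (n + 1), theta α (n + 2) (k + 2) * α ^ (2 * k) := by
    rw [entryA, if_pos le_rfl, entryLow, if_pos rfl, if_neg (by omega : ¬ 1 = n + 2)]
    have h : ∑ j ∈ Finset.Icc 1 (n + 2 - 1), theta α (n + 2) (j + 1) * α ^ (2 * j - 2 * 1)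
        = ∑ k ∈ range (n + 1), theta α (n + 2) (k + 2) * α ^ (2 * k) := by
      have e : n + 2 - 1 = 1 + n := by omega
      rw [e, sum_Icc_range]
      refine Finset.sum_congr rfl fun k hk => ?_
      have e1 : 1 + k + 1 = k + 2 := by omega
      have e2 : 2 * (1 + k) - 2 * 1 = 2 * k := by omega
      rw [e1, e2]
    rw [h]
  -- the column sum
  have hcol : ∑ i ∈ Finset.Icc 2 (n + 2), entryA α (n + 2) i 1
      = (α - 1) / 2 * (∑ k ∈ range n, theta α (n + 2) (k + 2) * α ^ k)
        + (α - 1) ^ 2 * (∑ k ∈ range n, ∑ l ∈ range (n - k),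
            theta α (n + 2) (k + l + 3) * α ^ (2 * l + k + 1))
        + (α - 1) * α ^ n / 2 := by
    have hsplit : ∑ i ∈ Finset.Icc 2 (n + 2), entryA α (n + 2) i 1
        = ∑ i ∈ Finset.Icc 2 (n + 1), entryA α (n + 2) i 1 + entryA α (n + 2) (n + 2) 1 :=
      Finset.sum_Icc_succ_top (by omega) (fun i => entryA α (n + 2) i 1)
    have htop : entryA α (n + 2) (n + 2) 1 = (α - 1) * α ^ n / 2 := by
      rw [entryA, if_pos (by omega), entryLow, if_neg (by omega), if_pos rfl]
      rfl
    rw [hsplit, htop]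
    congr 1
    -- main part: Icc 2 (n+1)
    rcases Nat.eq_zero_or_pos n with hn | hn
    · subst hn; simp
    have hI : Finset.Icc 2 (n + 1) = Finset.Icc 2 (2 + (n - 1)) := by congr 1; omega
    rw [hI, sum_Icc_range]
    have hrn : n - 1 + 1 = n := by omega
    rw [hrn]
    have hterm : ∀ k ∈ range n, entryA α (n + 2) (2 + k) 1
        = (α - 1) / 2 * (theta α (n + 2) (k + 2) * α ^ k)
          + (α - 1) ^ 2 * ∑ l ∈ range (n - k), theta α (n + 2) (k + l + 3) * α ^ (2 * l + k + 1) := by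
      intro k hk
      rw [Finset.mem_range] at hk
      rw [entryA, if_pos (by omega), entryLow, if_neg (by omega), if_neg (by omega)]
      have e1 : 2 + k - 1 - 1 = k := by omega
      have e2 : 2 + k = k + 2 := by omega
      have hI2 : Finset.Icc (2 + k) (n + 2 - 1) = Finset.Icc (2 + k) ((2 + k) + (n - k - 1)) := by
        congr 1; omega
      rw [e1, hI2, sum_Icc_range]
      have hrn2 : n - k - 1 + 1 = n - k := by omega
      rw [hrn2]
      have hin : ∑ l ∈ range (n - k), theta α (n + 2) (2 + k + l + 1) * α ^ (2 * (2 + k + l) - (2 + k) - 1)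
          = ∑ l ∈ range (n - k), theta α (n + 2) (k + l + 3) * α ^ (2 * l + k + 1) := by
        refine Finset.sum_congr rfl fun l hl => ?_
        have e3 : 2 + k + l + 1 = k + l + 3 := by omega
        have e4 : 2 * (2 + k + l) - (2 + k) - 1 = 2 * l + k + 1 := by omega
        rw [e3, e4]
      rw [hin, e2]
      ring
    rw [Finset.sum_congr rfl hterm, Finset.sum_add_distrib, ← Finset.mul_sum, ← Finset.mul_sum]
  rw [h11, hcol]
  -- Now pure algebra with the sum identities
  set S1 := ∑ k ∈ range (n + 1), theta α (n + 2) (k + 2) * α ^ (2 * k) with hS1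
  set S2 := ∑ k ∈ range n, theta α (n + 2) (k + 2) * α ^ k with hS2
  set DS := ∑ k ∈ range n, ∑ l ∈ range (n - k), theta α (n + 2) (k + l + 3) * α ^ (2 * l + k + 1) with hDS
  set QA := ∑ k ∈ range n, theta α (n + 2) (k + 3) * α ^ (2 * k + 2) with hQA
  set QB := ∑ k ∈ range n, theta α (n + 2) (k + 3) * α ^ (k + 1) with hQB
  have E1 : (α - 1) * DS = QA - QB := by
    rw [hDS, Dlem, hQA, hQB, ← Finset.sum_sub_distrib]
    exact Finset.sum_congr rfl fun k _ => by ring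
  have E2 : S1 = theta α (n + 2) 2 + QA := by
    rw [hS1, Finset.sum_range_succ' (fun k => theta α (n + 2) (k + 2) * α ^ (2 * k))]
    rw [hQA]
    have : ∑ k ∈ range n, theta α (n + 2) (k + 1 + 2) * α ^ (2 * (k + 1))
        = ∑ k ∈ range n, theta α (n + 2) (k + 3) * α ^ (2 * k + 2) := by
      refine Finset.sum_congr rfl fun k _ => ?_
      have e1 : k + 1 + 2 = k + 3 := by omega
      have e2 : 2 * (k + 1) = 2 * k + 2 := by omega
      rw [e1, e2]
    rw [this]
    simp [add_comm]
  have E4 : ∑ k ∈ range (n + 1), theta α (n + 2) (k + 2) * α ^ k = (n : ℝ) + 1 := by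
    have := sumTheta α (n + 1)
    push_cast at this ⊢
    convert this using 2
  have E3 : theta α (n + 2) 2 + QB = (n : ℝ) + 1 := by
    rw [← E4, Finset.sum_range_succ' (fun k => theta α (n + 2) (k + 2) * α ^ k)]
    rw [hQB]
    have : ∑ k ∈ range n, theta α (n + 2) (k + 1 + 2) * α ^ (k + 1)
        = ∑ k ∈ range n, theta α (n + 2) (k + 3) * α ^ (k + 1) := by
      refine Finset.sum_congr rfl fun k _ => ?_
      have e1 : k + 1 + 2 = k + 3 := by omega
      rw [e1]
    rw [this]
    simp [add_comm]
  have E5 : S2 = (n : ℝ) + 1 - α ^ n := by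
    have h := E4
    rw [Finset.sum_range_succ, theta_top, one_mul] at h
    rw [hS2]
    linarith
  push_cast
  linear_combination (α - 1) ^ 2 * E2 - (α - 1) ^ 2 * E1 + (α - 1) ^ 2 * E3
    - (α - 1) ^ 2 / 2 * E5
end

section
/- For all T ≥ 1, det A_T = (1/2^T) ∏_{i=0}^{T-1} (1 + β² i), and A_T is positive definite. -/
open Finset
open Matrix

noncomputable def Bf (α : ℝ) (i j : ℕ) : ℝ :=
  if i = j then 1 else if i < j then (α-1)*α^(j-i-1) else 0

noncomputable def df (α : ℝ) (T j : ℕ) : ℝ := (1 + (α-1)^2*((T:ℝ)-1-(j:ℝ)))/2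

lemma rhs_red (α : ℝ) (i k n : ℕ) (hk : k ≤ i) :
    ∑ j ∈ range (i+n+1), Bf α i j * df α (i+n+1) j * Bf α k j
      = df α (i+n+1) i * Bf α k i
        + ∑ m ∈ range n, ((α-1)*α^m) * df α (i+n+1) (i+m+1) * Bf α k (i+m+1) := by
  have hsub : Ico i (i+n+1) ⊆ range (i+n+1) := fun x hx => by
    simp only [mem_Ico] at hx; exact mem_range.mpr hx.2
  rw [← Finset.sum_subset hsub (fun x hx hx2 => ?_)]
  · rw [Finset.sum_Ico_eq_sum_range, show i+n+1-i = n+1 by omega, Finset.sum_range_succ']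
    rw [add_comm]
    congr 1
    · simp [Bf]
    · apply sum_congr rfl
      intro m hm
      have h1 : Bf α i (i+(m+1)) = (α-1)*α^m := by
        simp only [Bf, if_neg (by omega : ¬ i = i+(m+1)), if_pos (by omega : i < i+(m+1))]
        rw [show i+(m+1)-i-1 = m by omega]
      rw [h1, show i+(m+1) = i+m+1 by omega]
  · have hxi : x < i := by
      simp only [mem_Ico, not_and, not_lt] at hx2
      simp only [mem_range] at hx
      omega
    simp only [Bf, if_neg (by omega : ¬ i = x), if_neg (by omega : ¬ i < x)]
    ring

lemma entryLow_diag (α : ℝ) (i n : ℕ) :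
    entryLow α (i+n+1) (i+1) (i+1)
      = 1/2 + (α-1)^2 * ∑ m ∈ range n, α^(2*m) * (((n:ℝ)-m) - ((n:ℝ)-m-1)*α) := by
  rcases Nat.eq_zero_or_pos n with h0 | hn
  · subst h0; simp [entryLow]
  · rw [entryLow, if_pos rfl, if_neg (by omega : ¬ i+1 = i+n+1)]
    congr 1
    congr 1
    rw [show i+n+1-1 = i+n by omega, ← Finset.Ico_add_one_right_eq_Icc, Finset.sum_Ico_eq_sum_range,
      show i+n+1-(i+1) = n by omega]
    apply sum_congr rfl
    intro m hm
    rw [show 2*(i+1+m) - 2*(i+1) = 2*m by omega, theta]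
    push_cast
    ring

lemma entryLow_off (α : ℝ) (k p n : ℕ) :
    entryLow α (k+p+1+n+1) (k+p+1+1) (k+1)
      = (α-1)*((n:ℝ)+1-(n:ℝ)*α)*α^p/2
        + (α-1)^2 * ∑ m ∈ range n, α^(p+1+2*m) * (((n:ℝ)-m) - ((n:ℝ)-m-1)*α) := by
  rcases Nat.eq_zero_or_pos n with h0 | hn
  · subst h0
    rw [entryLow, if_neg (by omega), if_pos (by omega : k+p+1+1 = k+p+1+0+1)]
    rw [show k+p+1+0+1-(k+1)-1 = p by omega]
    simp
  · rw [entryLow, if_neg (by omega), if_neg (by omega : ¬ k+p+1+1 = k+p+1+n+1)]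
    rw [show k+p+1+1-(k+1)-1 = p by omega]
    congr 1
    · rw [theta]; push_cast; ring
    congr 1
    rw [show k+p+1+n+1-1 = k+p+1+n by omega, ← Finset.Ico_add_one_right_eq_Icc, Finset.sum_Ico_eq_sum_range,
      show k+p+1+n+1-(k+p+1+1) = n by omega]
    apply sum_congr rfl
    intro m hm
    rw [show 2*(k+p+1+1+m) - (k+p+1+1) - (k+1) = p+1+2*m by omega, theta]
    push_cast
    ring

lemma geom2 (a : ℝ) (n : ℕ) : (a^2 - 1) * ∑ m ∈ range n, a^(2*m) = a^(2*n) - 1 := by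
  have h := geom_sum_mul (a^2) n
  simp only [← pow_mul] at h
  linarith [h]

lemma Id1 (a : ℝ) (n : ℕ) :
    (n:ℝ) + ∑ m ∈ range n, a^(2*m) * (1 + (a-1)^2*((n:ℝ)-1-m))
      = 2 * ∑ m ∈ range n, a^(2*m) * (((n:ℝ)-m) - ((n:ℝ)-m-1)*a) := by
  induction n with
  | zero => simp
  | succ n ih =>
    have g2 := geom2 a n
    rw [sum_range_succ, sum_range_succ]
    have h1 : ∑ m ∈ range n, a^(2*m) * (1 + (a-1)^2*(((n:ℕ)+1:ℝ)-1-m))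
        = (∑ m ∈ range n, a^(2*m) * (1 + (a-1)^2*((n:ℝ)-1-m)))
          + (a-1)^2 * ∑ m ∈ range n, a^(2*m) := by
      rw [mul_sum, ← sum_add_distrib]
      exact sum_congr rfl fun m _ => by ring
    have h2 : ∑ m ∈ range n, a^(2*m) * ((((n:ℕ)+1:ℝ)-m) - (((n:ℕ)+1:ℝ)-m-1)*a)
        = (∑ m ∈ range n, a^(2*m) * (((n:ℝ)-m) - ((n:ℝ)-m-1)*a))
          + (1-a) * ∑ m ∈ range n, a^(2*m) := by
      rw [mul_sum, ← sum_add_distrib]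
      exact sum_congr rfl fun m _ => by ring
    push_cast
    push_cast at h1 h2
    rw [h1, h2]
    linear_combination ih + g2

lemma entry_eq_diag (α : ℝ) (i n : ℕ) :
    entryLow α (i+n+1) (i+1) (i+1)
      = ∑ j ∈ range (i+n+1), Bf α i j * df α (i+n+1) j * Bf α i j := by
  rw [rhs_red α i i n le_rfl, entryLow_diag]
  have hB : Bf α i i = 1 := by simp [Bf]
  have hs : ∑ m ∈ range n, ((α-1)*α^m) * df α (i+n+1) (i+m+1) * Bf α i (i+m+1)
      = (α-1)^2/2 * ∑ m ∈ range n, α^(2*m) * (1+(α-1)^2*((n:ℝ)-1-m)) := by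
    rw [mul_sum]; apply sum_congr rfl; intro m hm
    have hb2 : Bf α i (i+m+1) = (α-1)*α^m := by
      simp only [Bf, if_neg (by omega : ¬ i = i+m+1), if_pos (by omega : i < i+m+1)]
      rw [show i+m+1-i-1 = m by omega]
    rw [hb2, df]
    push_cast; ring
  rw [hB, hs, df]
  have h := Id1 α n
  push_cast
  linear_combination (-(α-1)^2/2) * h

lemma entry_eq_off (α : ℝ) (k p n : ℕ) :
    entryLow α (k+p+1+n+1) (k+p+1+1) (k+1)
      = ∑ j ∈ range (k+p+1+n+1), Bf α (k+p+1) j * df α (k+p+1+n+1) j * Bf α k j := by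
  rw [rhs_red α (k+p+1) k n (by omega), entryLow_off]
  have hBki : Bf α k (k+p+1) = (α-1)*α^p := by
    simp only [Bf, if_neg (by omega : ¬ k = k+p+1), if_pos (by omega : k < k+p+1)]
    rw [show k+p+1-k-1 = p by omega]
  have hs : ∑ m ∈ range n, ((α-1)*α^m) * df α (k+p+1+n+1) (k+p+1+m+1) * Bf α k (k+p+1+m+1)
      = (α-1)^2*α^(p+1)/2 * ∑ m ∈ range n, α^(2*m) * (1+(α-1)^2*((n:ℝ)-1-m)) := by
    rw [mul_sum]; apply sum_congr rfl; intro m hm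
    have hb2 : Bf α k (k+p+1+m+1) = (α-1)*α^(p+m+1) := by
      simp only [Bf, if_neg (by omega : ¬ k = k+p+1+m+1), if_pos (by omega : k < k+p+1+m+1)]
      rw [show k+p+1+m+1-k-1 = p+m+1 by omega]
    rw [hb2, df]
    push_cast; ring
  have hs2 : ∑ m ∈ range n, α^(p+1+2*m) * (((n:ℝ)-m) - ((n:ℝ)-m-1)*α)
      = α^(p+1) * ∑ m ∈ range n, α^(2*m) * (((n:ℝ)-m) - ((n:ℝ)-m-1)*α) := by
    rw [mul_sum]; apply sum_congr rfl; intro m hm; rw [pow_add]; ring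
  rw [hBki, hs, hs2, df]
  have h := Id1 α n
  push_cast
  linear_combination (-(α-1)^2*α^(p+1)/2) * h

noncomputable def Bm (α : ℝ) (T : ℕ) : Matrix (Fin T) (Fin T) ℝ :=
  Matrix.of fun i j => Bf α i.1 j.1

noncomputable def dm (α : ℝ) (T : ℕ) : Fin T → ℝ := fun j => df α T j.1

lemma entry_eq (α : ℝ) (T i k : ℕ) (hk : k ≤ i) (hi : i < T) :
    entryLow α T (i+1) (k+1) = ∑ j ∈ range T, Bf α i j * df α T j * Bf α k j := by
  obtain ⟨n, rfl⟩ : ∃ n, T = i+n+1 := ⟨T-i-1, by omega⟩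
  rcases eq_or_lt_of_le hk with rfl | hlt
  · exact entry_eq_diag α k n
  · obtain ⟨p, rfl⟩ : ∃ p, i = k+p+1 := ⟨i-k-1, by omega⟩
    exact entry_eq_off α k p n

lemma amat_factor (α : ℝ) (T : ℕ) :
    Amat α T = Bm α T * Matrix.diagonal (dm α T) * (Bm α T)ᵀ := by
  ext i k
  have hmul : (Bm α T * Matrix.diagonal (dm α T) * (Bm α T)ᵀ) i k
      = ∑ j : Fin T, Bf α i.1 j.1 * df α T j.1 * Bf α k.1 j.1 := by
    rw [Matrix.mul_apply]
    apply Finset.sum_congr rfl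
    intro j _
    rw [Matrix.mul_diagonal]
    simp [Bm, dm, Matrix.transpose_apply]
  rw [hmul, Fin.sum_univ_eq_sum_range (fun j => Bf α i.1 j * df α T j * Bf α k.1 j) T]
  show entryA α T (i.1+1) (k.1+1) = _
  rcases le_or_gt k.1 i.1 with h | h
  · rw [entryA, if_pos (by omega)]
    exact entry_eq α T i.1 k.1 h i.2
  · rw [entryA, if_neg (by omega)]
    rw [entry_eq α T k.1 i.1 (le_of_lt h) k.2]
    apply sum_congr rfl; intros; ring

lemma detB (α : ℝ) (T : ℕ) : (Bm α T).det = 1 := by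
  rw [Matrix.det_of_upperTriangular (M := Bm α T) ?_]
  · rw [Finset.prod_eq_one]
    intro i _
    simp [Bm, Bf]
  · intro i j hij
    have hij' : j.1 < i.1 := hij
    simp only [Bm, Matrix.of_apply, Bf, if_neg (by omega : ¬ i.1 = j.1),
      if_neg (by omega : ¬ i.1 < j.1)]

lemma posdef_conj {T : ℕ} {D B : Matrix (Fin T) (Fin T) ℝ} (hD : D.PosDef)
    (hB : IsUnit B.det) : (B * D * Bᵀ).PosDef := by
  have hCB : (Bᵀ)ᴴ = B := by ext i j; simp [Matrix.conjTranspose_apply]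
  rw [← hCB]
  refine posDef_iff_dotProduct_mulVec.mpr ⟨?_, ?_⟩
  · exact Matrix.isHermitian_conjTranspose_mul_mul Bᵀ hD.1
  · intro x hx
    have hy : Bᵀ *ᵥ x ≠ 0 := by
      have hinj : Function.Injective (Bᵀ).mulVec :=
        Matrix.mulVec_injective_iff_isUnit.mpr
          ((Matrix.isUnit_iff_isUnit_det _).mpr (by rwa [Matrix.det_transpose]))
      intro h0
      apply hx
      have : Bᵀ *ᵥ x = Bᵀ *ᵥ 0 := by simpa using h0
      simpa using hinj this
    simpa only [star_mulVec, dotProduct_mulVec, Matrix.vecMul_vecMul, hCB]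
      using hD.dotProduct_mulVec_pos hy

/-- det A_T = (1/2^T) ∏_{i=0}^{T-1} (1 + β² i), and A_T is positive definite. -/
theorem det_formula_and_posdef (α : ℝ) (T : ℕ) (hT : 1 ≤ T) :
    (Amat α T).det = (1 / 2 ^ T) * ∏ i ∈ Finset.range T, (1 + (α - 1) ^ 2 * (i : ℝ))
      ∧ (Amat α T).PosDef := by
  constructor
  · rw [amat_factor, Matrix.det_mul, Matrix.det_mul, detB, Matrix.det_transpose, detB,
      Matrix.det_diagonal, one_mul, mul_one]
    simp only [dm]
    rw [Fin.prod_univ_eq_prod_range (fun j => df α T j) T]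
    have hstep : ∀ j ∈ range T, df α T j = (1/2) * (1 + (α-1)^2 * ((T-1-j : ℕ):ℝ)) := by
      intro j hj
      rw [mem_range] at hj
      have h1 : (T - 1 - j) + (1 + j) = T := by omega
      have h2 : ((T-1-j:ℕ):ℝ) = (T:ℝ) - 1 - j := by
        have h3 := congrArg (Nat.cast : ℕ → ℝ) h1
        push_cast at h3
        linarith
      rw [df, h2]; ring
    rw [Finset.prod_congr rfl hstep, Finset.prod_mul_distrib, Finset.prod_const,
      Finset.prod_range_reflect (fun j => 1 + (α-1)^2 * (j:ℝ)) T]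
    rw [div_pow, one_pow, Finset.card_range]
  · rw [amat_factor]
    apply posdef_conj
    · apply Matrix.PosDef.diagonal
      intro j
      have hj : (j.1:ℝ) + 1 ≤ (T:ℝ) := by exact_mod_cast j.2
      have h0 : 0 ≤ (α-1)^2 * ((T:ℝ)-1-j.1) := mul_nonneg (sq_nonneg _) (by linarith)
      simp only [dm, df]
      linarith
    · rw [detB]; exact isUnit_one
end

section
/- For the recursion θ_k = (1 - (T-k)β) (with β = α - 1), the solutions of the system (1-β)η_{k+1} - η_k - β² ∑_{j=k+2}^{T} η_j α^{j-k-2} = 0 for k = 1,…,T-1 satisfy η_k = (1 - (T-k)β) η_T for all 1 ≤ k ≤ T. -/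
lemma sum_ident (α : ℝ) : ∀ d : ℕ,
    ∑ i ∈ Finset.range d, (1 - ((d : ℝ) - 1 - (i : ℝ)) * (α - 1)) * α ^ i = d := by
  intro d
  induction d with
  | zero => simp
  | succ n ih =>
    rw [Finset.sum_range_succ']
    have : ∑ i ∈ Finset.range n,
        (1 - (((n + 1 : ℕ) : ℝ) - 1 - ((i + 1 : ℕ) : ℝ)) * (α - 1)) * α ^ (i + 1)
        = α * ∑ i ∈ Finset.range n, (1 - ((n : ℝ) - 1 - (i : ℝ)) * (α - 1)) * α ^ i := by
      rw [Finset.mul_sum]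
      apply Finset.sum_congr rfl
      intro i _
      push_cast
      ring
    rw [this, ih]
    push_cast
    ring

/-- Solutions of the system (1-β)η_{k+1} - η_k - β² ∑_{j=k+2}^T η_j α^{j-k-2} = 0,
    k = 1,…,T-1, satisfy η_k = (1 - (T-k)β) η_T. -/
theorem recursion_solution (α : ℝ) (T : ℕ) (hT : 1 ≤ T) (η : ℕ → ℝ)
    (hsys : ∀ k, 1 ≤ k → k ≤ T - 1 →
      (1 - (α - 1)) * η (k + 1) - η k
        - (α - 1) ^ 2 * ∑ j ∈ Finset.Icc (k + 2) T, η j * α ^ (j - k - 2) = 0) :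
    ∀ k, 1 ≤ k → k ≤ T → η k = (1 - ((T : ℝ) - k) * (α - 1)) * η T := by
  have key : ∀ d : ℕ, ∀ k, 1 ≤ k → k ≤ T → T - k = d →
      η k = (1 - ((T : ℝ) - k) * (α - 1)) * η T := by
    intro d
    induction d using Nat.strong_induction_on with
    | _ d ih =>
      intro k hk1 hkT hd
      match d, hd with
      | 0, hd =>
        have : k = T := by omega
        subst this
        simp
      | (e+1), hd =>
        have hkT1 : k ≤ T - 1 := by omega
        have heq := hsys k hk1 hkT1
        have hη1 := ih e (by omega) (k + 1) (by omega) (by omega) (by omega)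
        push_cast at hη1
        have hsum : ∑ j ∈ Finset.Icc (k + 2) T, η j * α ^ (j - k - 2)
            = (e : ℝ) * η T := by
          have step1 : ∑ j ∈ Finset.Icc (k + 2) T, η j * α ^ (j - k - 2)
              = ∑ j ∈ Finset.Icc (k + 2) T,
                  ((1 - ((T : ℝ) - j) * (α - 1)) * η T) * α ^ (j - k - 2) := by
            apply Finset.sum_congr rfl
            intro j hj
            rw [Finset.mem_Icc] at hj
            rw [ih (T - j) (by omega) j (by omega) (by omega) rfl]
          rw [step1, ← Finset.Ico_add_one_right_eq_Icc, Finset.sum_Ico_eq_sum_range]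
          have hrange : T + 1 - (k + 2) = e := by omega
          rw [hrange]
          have step2 : ∀ i ∈ Finset.range e,
              ((1 - ((T : ℝ) - ((k + 2 + i : ℕ) : ℝ)) * (α - 1)) * η T) * α ^ (k + 2 + i - k - 2)
              = ((1 - ((e : ℝ) - 1 - (i : ℝ)) * (α - 1)) * α ^ i) * η T := by
            intro i hi
            rw [Finset.mem_range] at hi
            have hexp : k + 2 + i - k - 2 = i := by omega
            have hcast : ((T : ℝ) - ((k + 2 + i : ℕ) : ℝ)) = (e : ℝ) - 1 - (i : ℝ) := by
              have : T = k + e + 1 := by omega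
              subst this
              push_cast
              ring
            rw [hexp, hcast]
            ring
          rw [Finset.sum_congr rfl step2, ← Finset.sum_mul, sum_ident]
        rw [hη1, hsum] at heq
        have hcast2 : (T : ℝ) - (k : ℝ) = (e : ℝ) + 1 := by
          have : T = k + e + 1 := by omega
          subst this
          push_cast
          ring
        have hcast3 : (T : ℝ) - ((k : ℝ) + 1) = (e : ℝ) := by linarith
        rw [hcast3] at heq
        rw [hcast2]
        linear_combination -heq
  intro k hk1 hkT
  exact key (T - k) k hk1 hkT rfl
end
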